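/- Let ABC be a hyperbolic triangle (in the hyperbolic plane of curvature -1) with side lengths a, b, c. If all side lengths are multiplied by the same factor t > 1 (and the new lengths still form a triangle, which they do), then each angle of the new triangle is strictly smaller than the corresponding angle of the original triangle. -/

import Mathlib

open Real Set

private lemma aux_sinh_lt_mul_cosh {x : ℝ} (hx : 0 < x) : Real.sinh x < x * Real.cosh x := by
  have hd : ∀ u : ℝ, HasDerivAt (fun u : ℝ => u * Real.cosh u - Real.sinh u)
      (u * Real.sinh u) u := by
    intro u
    have h1 : HasDerivAt (fun u : ℝ => u * Real.cosh u)
        (1 * Real.cosh u + u * Real.sinh u) u :=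
      (hasDerivAt_id u).mul (Real.hasDerivAt_cosh u)
    have : HasDerivAt (fun u : ℝ => u * Real.cosh u - Real.sinh u)
        (1 * Real.cosh u + u * Real.sinh u - Real.cosh u) u := h1.sub (Real.hasDerivAt_sinh u)
    convert this using 1
    ring
  have hmono : StrictMonoOn (fun u : ℝ => u * Real.cosh u - Real.sinh u) (Ici 0) := by
    apply strictMonoOn_of_deriv_pos (convex_Ici 0)
    · exact ((continuous_id.mul Real.continuous_cosh).sub Real.continuous_sinh).continuousOn
    · intro u hu
      rw [interior_Ici, mem_Ioi] at hu
      rw [(hd u).deriv]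
      exact mul_pos hu (Real.sinh_pos_iff.mpr hu)
  have := hmono (self_mem_Ici) (le_of_lt hx : (0:ℝ) ≤ x) hx
  simpa using this

private lemma aux_sinh_div_mono {x y : ℝ} (hx : 0 < x) (hxy : x < y) :
    y * Real.sinh x < x * Real.sinh y := by
  have hy : 0 < y := hx.trans hxy
  have hmono : StrictMonoOn (fun u : ℝ => Real.sinh u / u) (Ioi 0) := by
    apply strictMonoOn_of_deriv_pos (convex_Ioi 0)
    · exact ContinuousOn.div Real.continuous_sinh.continuousOn continuous_id.continuousOn
        (fun u hu => ne_of_gt hu)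
    · intro u hu
      rw [interior_Ioi, mem_Ioi] at hu
      have hd : HasDerivAt (fun u : ℝ => Real.sinh u / u)
          ((Real.cosh u * u - Real.sinh u * 1) / u ^ 2) u :=
        (Real.hasDerivAt_sinh u).div (hasDerivAt_id u) (ne_of_gt hu)
      rw [hd.deriv]
      apply div_pos
      · have := aux_sinh_lt_mul_cosh hu
        nlinarith
      · positivity
  have h := hmono (mem_Ioi.mpr hx) (mem_Ioi.mpr hy) hxy
  simp only [] at h
  rw [div_lt_div_iff₀ hx hy] at h
  linarith

private lemma aux_key_pos {t u : ℝ} (ht : 1 < t) (hu : 0 < u) :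
    Real.sinh (t * u) * Real.cosh u < t * Real.cosh (t * u) * Real.sinh u := by
  have h1 : 0 < (t - 1) * u := mul_pos (by linarith) hu
  have h2 : (t - 1) * u < (t + 1) * u := by nlinarith
  have h := aux_sinh_div_mono h1 h2
  have e1 : Real.sinh ((t + 1) * u) =
      Real.sinh (t * u) * Real.cosh u + Real.cosh (t * u) * Real.sinh u := by
    rw [show (t + 1) * u = t * u + u by ring, Real.sinh_add]
  have e2 : Real.sinh ((t - 1) * u) =
      Real.sinh (t * u) * Real.cosh u - Real.cosh (t * u) * Real.sinh u := by
    rw [show (t - 1) * u = t * u - u by ring, Real.sinh_sub]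
  rw [e1, e2] at h
  nlinarith

private lemma aux_sinh_ratio_mono {t : ℝ} (ht : 1 < t) :
    StrictMonoOn (fun u : ℝ => Real.sinh (t * u) / Real.sinh u) (Ioi 0) := by
  apply strictMonoOn_of_deriv_pos (convex_Ioi 0)
  · apply ContinuousOn.div
    · exact (Real.continuous_sinh.comp (continuous_const.mul continuous_id)).continuousOn
    · exact Real.continuous_sinh.continuousOn
    · intro u hu
      exact Real.sinh_ne_zero.mpr (ne_of_gt hu)
  · intro u hu
    rw [interior_Ioi, mem_Ioi] at hu
    have hnum : HasDerivAt (fun u : ℝ => Real.sinh (t * u)) (Real.cosh (t * u) * (t * 1)) u :=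
      (Real.hasDerivAt_sinh (t * u)).comp u ((hasDerivAt_id u).const_mul t)
    have hd : HasDerivAt (fun u : ℝ => Real.sinh (t * u) / Real.sinh u)
        ((Real.cosh (t * u) * (t * 1) * Real.sinh u - Real.sinh (t * u) * Real.cosh u) /
          Real.sinh u ^ 2) u :=
      hnum.div (Real.hasDerivAt_sinh u) (Real.sinh_ne_zero.mpr (ne_of_gt hu))
    rw [hd.deriv]
    apply div_pos
    · have := aux_key_pos ht hu
      nlinarith
    · have := Real.sinh_pos_iff.mpr hu
      positivity

private lemma aux_prod_lt {t p q y z : ℝ} (ht : 1 < t) (hp : 0 < p) (hq : 0 < q)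
    (hpy : p < y) (hqz : q < z) :
    Real.sinh (t * p) * Real.sinh (t * q) * (Real.sinh y * Real.sinh z) <
      Real.sinh (t * y) * Real.sinh (t * z) * (Real.sinh p * Real.sinh q) := by
  have hy : 0 < y := hp.trans hpy
  have hz : 0 < z := hq.trans hqz
  have ht0 : (0:ℝ) < t := by linarith
  have h1 := aux_sinh_ratio_mono ht (mem_Ioi.mpr hp) (mem_Ioi.mpr hy) hpy
  have h2 := aux_sinh_ratio_mono ht (mem_Ioi.mpr hq) (mem_Ioi.mpr hz) hqz
  simp only [] at h1 h2
  have sp : 0 < Real.sinh p := Real.sinh_pos_iff.mpr hp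
  have sq : 0 < Real.sinh q := Real.sinh_pos_iff.mpr hq
  have sy : 0 < Real.sinh y := Real.sinh_pos_iff.mpr hy
  have sz : 0 < Real.sinh z := Real.sinh_pos_iff.mpr hz
  have stp : 0 < Real.sinh (t * p) := Real.sinh_pos_iff.mpr (mul_pos ht0 hp)
  have stq : 0 < Real.sinh (t * q) := Real.sinh_pos_iff.mpr (mul_pos ht0 hq)
  have hmul : Real.sinh (t * p) / Real.sinh p * (Real.sinh (t * q) / Real.sinh q) <
      Real.sinh (t * y) / Real.sinh y * (Real.sinh (t * z) / Real.sinh z) :=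
    mul_lt_mul'' h1 h2 (le_of_lt (div_pos stp sp)) (le_of_lt (div_pos stq sq))
  rw [div_mul_div_comm, div_mul_div_comm,
    div_lt_div_iff₀ (mul_pos sp sq) (mul_pos sy sz)] at hmul
  linarith

private lemma aux_cosh_sub_cosh (a b : ℝ) :
    Real.cosh a - Real.cosh b = 2 * Real.sinh ((a + b) / 2) * Real.sinh ((a - b) / 2) := by
  have h1 := Real.cosh_add ((a + b) / 2) ((a - b) / 2)
  have h2 := Real.cosh_sub ((a + b) / 2) ((a - b) / 2)
  rw [show (a + b) / 2 + (a - b) / 2 = a by ring] at h1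
  rw [show (a + b) / 2 - (a - b) / 2 = b by ring] at h2
  linarith

noncomputable def hypAngle (a b c : ℝ) : ℝ :=
  Real.arccos ((Real.cosh b * Real.cosh c - Real.cosh a) / (Real.sinh b * Real.sinh c))

private lemma aux_angle_lt (x y z t : ℝ) (hx : 0 < x) (hy : 0 < y) (hz : 0 < z)
    (h1 : x < y + z) (h2 : y < x + z) (h3 : z < x + y) (ht : 1 < t) :
    hypAngle (t * x) (t * y) (t * z) < hypAngle x y z := by
  have ht0 : (0:ℝ) < t := by linarith
  -- generic facts about Q for a triangle
  have bounds : ∀ X Y Z : ℝ, 0 < X → 0 < Y → 0 < Z → X < Y + Z → Y < X + Z → Z < X + Y →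
      -1 < (Real.cosh Y * Real.cosh Z - Real.cosh X) / (Real.sinh Y * Real.sinh Z) ∧
      (Real.cosh Y * Real.cosh Z - Real.cosh X) / (Real.sinh Y * Real.sinh Z) < 1 := by
    intro X Y Z hX hY hZ hXYZ hYXZ hZXY
    have sY : 0 < Real.sinh Y := Real.sinh_pos_iff.mpr hY
    have sZ : 0 < Real.sinh Z := Real.sinh_pos_iff.mpr hZ
    have hD : 0 < Real.sinh Y * Real.sinh Z := mul_pos sY sZ
    constructor
    · rw [lt_div_iff₀ hD]
      have hc : Real.cosh X < Real.cosh (Y + Z) := by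
        rw [Real.cosh_lt_cosh]
        rw [abs_of_pos hX, abs_of_pos (by linarith : (0:ℝ) < Y + Z)]
        exact hXYZ
      rw [Real.cosh_add] at hc
      linarith
    · rw [div_lt_one hD]
      have hc : Real.cosh (Y - Z) < Real.cosh X := by
        rw [Real.cosh_lt_cosh, abs_of_pos hX]
        rw [abs_lt]
        constructor <;> linarith
      rw [Real.cosh_sub] at hc
      linarith
  obtain ⟨blo, bhi⟩ := bounds x y z hx hy hz h1 h2 h3
  obtain ⟨blo', bhi'⟩ := bounds (t * x) (t * y) (t * z) (mul_pos ht0 hx) (mul_pos ht0 hy)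
    (mul_pos ht0 hz) (by nlinarith) (by nlinarith) (by nlinarith)
  -- the main inequality Q < Q_t
  have sY : 0 < Real.sinh y := Real.sinh_pos_iff.mpr hy
  have sZ : 0 < Real.sinh z := Real.sinh_pos_iff.mpr hz
  have sY' : 0 < Real.sinh (t * y) := Real.sinh_pos_iff.mpr (mul_pos ht0 hy)
  have sZ' : 0 < Real.sinh (t * z) := Real.sinh_pos_iff.mpr (mul_pos ht0 hz)
  have hQlt : (Real.cosh y * Real.cosh z - Real.cosh x) / (Real.sinh y * Real.sinh z) <
      (Real.cosh (t * y) * Real.cosh (t * z) - Real.cosh (t * x)) /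
        (Real.sinh (t * y) * Real.sinh (t * z)) := by
    rw [div_lt_div_iff₀ (mul_pos sY sZ) (mul_pos sY' sZ')]
    set p := (x + y - z) / 2 with hp_def
    set q := (x - y + z) / 2 with hq_def
    have hp : 0 < p := by rw [hp_def]; linarith
    have hq : 0 < q := by rw [hq_def]; linarith
    have hpy : p < y := by rw [hp_def]; linarith
    have hqz : q < z := by rw [hq_def]; linarith
    have id1 : Real.cosh y * Real.cosh z - Real.cosh x =
        Real.sinh y * Real.sinh z - 2 * Real.sinh p * Real.sinh q := by
      have e := aux_cosh_sub_cosh x (y - z)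
      rw [Real.cosh_sub] at e
      rw [show (x + (y - z)) / 2 = p by rw [hp_def]; ring,
        show (x - (y - z)) / 2 = q by rw [hq_def]; ring] at e
      linarith
    have id2 : Real.cosh (t * y) * Real.cosh (t * z) - Real.cosh (t * x) =
        Real.sinh (t * y) * Real.sinh (t * z) -
          2 * Real.sinh (t * p) * Real.sinh (t * q) := by
      have e := aux_cosh_sub_cosh (t * x) (t * y - t * z)
      rw [Real.cosh_sub] at e
      rw [show (t * x + (t * y - t * z)) / 2 = t * p by rw [hp_def]; ring,
        show (t * x - (t * y - t * z)) / 2 = t * q by rw [hq_def]; ring] at e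
      linarith
    rw [id1, id2]
    have hmain := aux_prod_lt ht hp hq hpy hqz
    nlinarith
  unfold hypAngle
  exact strictAntiOn_arccos ⟨le_of_lt blo, le_of_lt bhi⟩ ⟨le_of_lt blo', le_of_lt bhi'⟩ hQlt

theorem scaled_hyperbolic_triangle_angles_decrease
    (a b c t : ℝ) (ha : 0 < a) (hb : 0 < b) (hc : 0 < c)
    (hab : a < b + c) (hbc : b < a + c) (hca : c < a + b) (ht : 1 < t) :
    hypAngle (t * a) (t * b) (t * c) < hypAngle a b c ∧
    hypAngle (t * b) (t * c) (t * a) < hypAngle b c a ∧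
    hypAngle (t * c) (t * a) (t * b) < hypAngle c a b := by
  refine ⟨aux_angle_lt a b c t ha hb hc hab hbc hca ht,
    aux_angle_lt b c a t hb hc ha (by linarith) (by linarith) (by linarith) ht,
    aux_angle_lt c a b t hc ha hb (by linarith) (by linarith) (by linarith) ht⟩
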